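/- arXiv:2308.07351 — 5 statements merged into one kernel-verified Lean document; each statement's English description precedes it below -/
import Mathlib

section
/- In a discounted MDP with discount γ ∈ [0,1), suppose a policy π̃_g satisfies, at every state s, the one-step soft Bellman improvement inequality V_{π_tar}(s) ≤ E_{a∼π̃_g(·|s)}[r(s,a) − α log π̃_g(a|s) + γ E_{s'∼p(·|s,a)} V_{π_tar}(s')] + 2μ. Then V_{π̃_g}(s) ≥ V_{π_tar}(s) − 2μ/(1−γ) for all s. -/
/-- If π̃_g satisfies the one-step soft Bellman improvement inequality
with slack 2μ at every state, then V_{π̃_g}(s) ≥ V_{π_tar}(s) − 2μ/(1−γ) everywhere. -/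
theorem soft_bellman_improvement_value_bound
    {S A : Type*} [Fintype S] [Fintype A]
    (p : S → A → S → ℝ) (r : S → A → ℝ) (γ α μ : ℝ)
    (hγ : 0 ≤ γ) (hγ1 : γ < 1) (hα : 0 ≤ α) (hμ : 0 ≤ μ)
    (hp_nonneg : ∀ s a s', 0 ≤ p s a s')
    (hp_sum : ∀ s a, ∑ s', p s a s' = 1)
    (πg : S → A → ℝ)
    (hπg_nonneg : ∀ s a, 0 ≤ πg s a)
    (hπg_sum : ∀ s, ∑ a, πg s a = 1)
    (Vtar Vg : S → ℝ)
    -- soft Bellman equation for V_{π̃_g}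
    (hVg : ∀ s, Vg s =
      ∑ a, πg s a * (r s a - α * Real.log (πg s a) + γ * ∑ s', p s a s' * Vg s'))
    -- one-step soft Bellman improvement inequality for V_{π_tar}
    (himp : ∀ s, Vtar s ≤
      (∑ a, πg s a * (r s a - α * Real.log (πg s a) + γ * ∑ s', p s a s' * Vtar s'))
        + 2 * μ) :
    ∀ s : S, Vg s ≥ Vtar s - 2 * μ / (1 - γ) := by
  intro s
  have hne : (Finset.univ : Finset S).Nonempty := ⟨s, Finset.mem_univ s⟩
  set f : S → ℝ := fun t => Vtar t - Vg t with hf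
  obtain ⟨s0, -, hs0⟩ := Finset.exists_max_image Finset.univ f hne
  have hstep : ∀ a, γ * (∑ s', p s0 a s' * Vtar s') - γ * (∑ s', p s0 a s' * Vg s')
      ≤ γ * f s0 := by
    intro a
    rw [← mul_sub]
    refine mul_le_mul_of_nonneg_left ?_ hγ
    rw [← Finset.sum_sub_distrib]
    calc ∑ s', (p s0 a s' * Vtar s' - p s0 a s' * Vg s')
        = ∑ s', p s0 a s' * f s' := by
          refine Finset.sum_congr rfl fun s' _ => ?_
          simp [hf, mul_sub]
      _ ≤ ∑ s', p s0 a s' * f s0 :=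
          Finset.sum_le_sum fun s' _ =>
            mul_le_mul_of_nonneg_left (hs0 s' (Finset.mem_univ _)) (hp_nonneg _ _ _)
      _ = f s0 := by rw [← Finset.sum_mul, hp_sum, one_mul]
  have key : f s0 ≤ γ * f s0 + 2 * μ := by
    have h1 := himp s0
    have h2 := hVg s0
    have hcalc : f s0 ≤
        (∑ a, πg s0 a * (γ * (∑ s', p s0 a s' * Vtar s')
          - γ * (∑ s', p s0 a s' * Vg s'))) + 2 * μ := by
      have : f s0 ≤
          ((∑ a, πg s0 a * (r s0 a - α * Real.log (πg s0 a) + γ * ∑ s', p s0 a s' * Vtar s'))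
            + 2 * μ)
          - ∑ a, πg s0 a * (r s0 a - α * Real.log (πg s0 a) + γ * ∑ s', p s0 a s' * Vg s') := by
        simp only [hf]
        linarith [h1, h2.ge, h2.le]
      have hAB : (∑ a, πg s0 a * (r s0 a - α * Real.log (πg s0 a) + γ * ∑ s', p s0 a s' * Vtar s'))
          - ∑ a, πg s0 a * (r s0 a - α * Real.log (πg s0 a) + γ * ∑ s', p s0 a s' * Vg s')
          = ∑ a, πg s0 a * (γ * (∑ s', p s0 a s' * Vtar s')
              - γ * (∑ s', p s0 a s' * Vg s')) := by
        rw [← Finset.sum_sub_distrib]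
        exact Finset.sum_congr rfl fun a _ => by ring
      linarith [hAB]
    refine hcalc.trans (add_le_add_left ?_ _)
    calc ∑ a, πg s0 a * (γ * (∑ s', p s0 a s' * Vtar s') - γ * (∑ s', p s0 a s' * Vg s'))
        ≤ ∑ a, πg s0 a * (γ * f s0) :=
          Finset.sum_le_sum fun a _ =>
            mul_le_mul_of_nonneg_left (hstep a) (hπg_nonneg _ _)
      _ = γ * f s0 := by rw [← Finset.sum_mul, hπg_sum, one_mul]
  have h1γ : (0:ℝ) < 1 - γ := by linarith
  have hfs0 : f s0 ≤ 2 * μ / (1 - γ) := by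
    rw [le_div_iff₀ h1γ]
    nlinarith [key]
  have := (hs0 s (Finset.mem_univ s)).trans hfs0
  simp only [hf] at this
  linarith
end

section
/- Theorem 1: Let Q̃_{π_tar} approximate the soft Q-function of π_tar with |Q̃_{π_tar}(s,a) − Q_{π_tar}(s,a)| ≤ μ for all s,a. Define π̃_g(·|s) = argmax_{π(·|s)∈Π^s} E_{a∼π(·|s)}[Q̃_{π_tar}(s,a) − α log π(a|s)], where Π^s contains π_tar(·|s). Then V_{π̃_g}(s) ≥ V_{π_tar}(s) − 2μ/(1−γ) for all s ∈ S. -/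
private lemma conv_le {A : Type*} [Fintype A] (w x : A → ℝ) (M : ℝ)
    (hw : ∀ a, 0 ≤ w a) (hsum : ∑ a, w a = 1) (hx : ∀ a, x a ≤ M) :
    ∑ a, w a * x a ≤ M := by
  calc ∑ a, w a * x a ≤ ∑ a, w a * M :=
        Finset.sum_le_sum fun a _ => mul_le_mul_of_nonneg_left (hx a) (hw a)
    _ = M := by rw [← Finset.sum_mul, hsum, one_mul]


/-- Theorem 1: With an approximate soft Q-function within μ of the
true one, the guidance policy chosen greedily from a candidate set containing
π_tar(·|s) satisfies V_{π̃_g}(s) ≥ V_{π_tar}(s) − 2μ/(1−γ) for all s. -/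
theorem theorem_one_guidance_policy_value_bound
    {S A : Type*} [Fintype S] [Fintype A]
    (p : S → A → S → ℝ) (r : S → A → ℝ) (γ α μ : ℝ)
    (hγ : 0 ≤ γ) (hγ1 : γ < 1) (hα : 0 ≤ α) (hμ : 0 ≤ μ)
    (hp_nonneg : ∀ s a s', 0 ≤ p s a s')
    (hp_sum : ∀ s a, ∑ s', p s a s' = 1)
    (πtar πg : S → A → ℝ)
    (hπtar_nonneg : ∀ s a, 0 ≤ πtar s a) (hπtar_sum : ∀ s, ∑ a, πtar s a = 1)
    (hπg_nonneg : ∀ s a, 0 ≤ πg s a) (hπg_sum : ∀ s, ∑ a, πg s a = 1)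
    (Qtar Qapprox : S → A → ℝ) (Vtar Vg : S → ℝ)
    -- soft Bellman equations for π_tar
    (hQtar : ∀ s a, Qtar s a = r s a + γ * ∑ s', p s a s' * Vtar s')
    (hVtar : ∀ s, Vtar s = ∑ a, πtar s a * (Qtar s a - α * Real.log (πtar s a)))
    -- soft Bellman equation for the guidance policy's value
    (hVg : ∀ s, Vg s =
      ∑ a, πg s a * (r s a - α * Real.log (πg s a) + γ * ∑ s', p s a s' * Vg s'))
    -- Q-approximation error bound
    (happrox : ∀ s a, |Qapprox s a - Qtar s a| ≤ μ)
    -- candidate sets containing the target policy's action distribution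
    (Pis : S → Finset (A → ℝ))
    (hdist : ∀ s, ∀ q ∈ Pis s, (∀ a, 0 ≤ q a) ∧ (∑ a, q a = 1))
    (hmem_tar : ∀ s, (fun a => πtar s a) ∈ Pis s)
    (hmem_g : ∀ s, (fun a => πg s a) ∈ Pis s)
    -- π̃_g(·|s) maximizes the expected approximate soft value over Π^s
    (hmax : ∀ s, ∀ q ∈ Pis s,
      (∑ a, q a * (Qapprox s a - α * Real.log (q a))) ≤
        (∑ a, πg s a * (Qapprox s a - α * Real.log (πg s a)))) :
    ∀ s : S, Vg s ≥ Vtar s - 2 * μ / (1 - γ) := by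
  intro s
  set f : S → ℝ := fun t => Vtar t - Vg t with hf
  obtain ⟨s0, -, hs0⟩ := Finset.exists_max_image Finset.univ f ⟨s, Finset.mem_univ s⟩
  have hs0' : ∀ t, f t ≤ f s0 := fun t => hs0 t (Finset.mem_univ t)
  -- step 1: greedy with approximation
  have hA : ∀ t, Vtar t - 2*μ ≤ ∑ a, πg t a * (Qtar t a - α * Real.log (πg t a)) := by
    intro t
    have h1 := hmax t _ (hmem_tar t)
    have e1 : ∑ a, πtar t a * (Qapprox t a - α * Real.log (πtar t a))
        = ∑ a, πtar t a * (Qtar t a - α * Real.log (πtar t a))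
          + ∑ a, πtar t a * (Qapprox t a - Qtar t a) := by
      rw [← Finset.sum_add_distrib]; exact Finset.sum_congr rfl fun a _ => by ring
    have e2 : ∑ a, πg t a * (Qtar t a - α * Real.log (πg t a))
        = ∑ a, πg t a * (Qapprox t a - α * Real.log (πg t a))
          + ∑ a, πg t a * (Qtar t a - Qapprox t a) := by
      rw [← Finset.sum_add_distrib]; exact Finset.sum_congr rfl fun a _ => by ring
    have b1 : -μ ≤ ∑ a, πtar t a * (Qapprox t a - Qtar t a) := by
      have e3 : ∑ a, πtar t a * (Qapprox t a - Qtar t a)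
          = -∑ a, πtar t a * -(Qapprox t a - Qtar t a) := by
        rw [← Finset.sum_neg_distrib]; exact Finset.sum_congr rfl fun a _ => by ring
      linarith [e3, conv_le (πtar t) (fun a => -(Qapprox t a - Qtar t a)) μ
        (hπtar_nonneg t) (hπtar_sum t)
        (fun a => by have := (abs_le.1 (happrox t a)).1; linarith)]
    have b2 : -μ ≤ ∑ a, πg t a * (Qtar t a - Qapprox t a) := by
      have e3 : ∑ a, πg t a * (Qtar t a - Qapprox t a)
          = -∑ a, πg t a * -(Qtar t a - Qapprox t a) := by
        rw [← Finset.sum_neg_distrib]; exact Finset.sum_congr rfl fun a _ => by ring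
      linarith [conv_le (πg t) (fun a => -(Qtar t a - Qapprox t a)) μ
        (hπg_nonneg t) (hπg_sum t)
        (fun a => by have := (abs_le.1 (happrox t a)).2; linarith), e3]
    have hV := hVtar t
    linarith [h1]
  -- step 2: Vg expansion
  have hB : ∀ t, f t ≤ 2*μ + γ * f s0 := by
    intro t
    have hVg' : Vg t = ∑ a, πg t a * (Qtar t a - α * Real.log (πg t a))
        - ∑ a, πg t a * (γ * ∑ s', p t a s' * f s') := by
      rw [hVg t, ← Finset.sum_sub_distrib]
      refine Finset.sum_congr rfl fun a _ => ?_
      have : ∑ s', p t a s' * f s' = ∑ s', p t a s' * Vtar s' - ∑ s', p t a s' * Vg s' := by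
        rw [← Finset.sum_sub_distrib]; exact Finset.sum_congr rfl fun s' _ => by ring
      rw [this, hQtar t a]; ring
    have hinner : ∀ a, γ * ∑ s', p t a s' * f s' ≤ γ * f s0 := fun a =>
      mul_le_mul_of_nonneg_left
        (conv_le (p t a) f (f s0) (hp_nonneg t a) (hp_sum t a) hs0') hγ
    have houter : ∑ a, πg t a * (γ * ∑ s', p t a s' * f s') ≤ γ * f s0 :=
      conv_le (πg t) _ (γ * f s0) (hπg_nonneg t) (hπg_sum t) hinner
    have hft : f t = Vtar t - Vg t := rfl
    have hfs0 : f s0 = Vtar s0 - Vg s0 := rfl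
    linarith [hA t, hVg', houter]
  have hM : f s0 ≤ 2*μ / (1 - γ) := by
    have h := hB s0
    rw [le_div_iff₀ (by linarith)]
    nlinarith
  have := hs0' s
  simp only [hf] at this ⊢
  have h2 : f s ≤ 2*μ / (1-γ) := le_trans (hs0' s) hM
  simp only [hf] at h2
  linarith
end

section
/- Performance difference bound: for any two policies π and π' in a discounted MDP, V_π(s) − V_{π'}(s) ≤ (1/(1−γ)) max_{s'} [E_{a∼π(·|s')} Q_{π'}(s',a) − E_{a∼π'(·|s')} Q_{π'}(s',a)] + (α/(1−γ)) max_{s''} |H(π(·|s'')) − H(π'(·|s''))| for all s ∈ S, where H denotes Shannon entropy and Q_{π'} is the soft Q-function of π'. -/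
/-- Performance difference bound for soft value functions:
V_π(s) − V_{π'}(s) ≤ (1/(1−γ)) max_{s'} [E_π Q_{π'} − E_{π'} Q_{π'}]
 + (α/(1−γ)) max_{s''} |H(π(·|s'')) − H(π'(·|s''))|. -/
theorem soft_performance_difference_bound
    {S A : Type*} [Fintype S] [Nonempty S] [Fintype A]
    (p : S → A → S → ℝ) (r : S → A → ℝ) (γ α : ℝ)
    (hγ : 0 ≤ γ) (hγ1 : γ < 1) (hα : 0 ≤ α)
    (hp_nonneg : ∀ s a s', 0 ≤ p s a s')
    (hp_sum : ∀ s a, ∑ s', p s a s' = 1)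
    (π π' : S → A → ℝ)
    (hπ_nonneg : ∀ s a, 0 ≤ π s a) (hπ_sum : ∀ s, ∑ a, π s a = 1)
    (hπ'_nonneg : ∀ s a, 0 ≤ π' s a) (hπ'_sum : ∀ s, ∑ a, π' s a = 1)
    (Q Q' : S → A → ℝ) (V V' : S → ℝ)
    -- soft Bellman equations for π
    (hQ : ∀ s a, Q s a = r s a + γ * ∑ s', p s a s' * V s')
    (hV : ∀ s, V s = ∑ a, π s a * (Q s a - α * Real.log (π s a)))
    -- soft Bellman equations for π'
    (hQ' : ∀ s a, Q' s a = r s a + γ * ∑ s', p s a s' * V' s')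
    (hV' : ∀ s, V' s = ∑ a, π' s a * (Q' s a - α * Real.log (π' s a))) :
    ∀ s : S, V s - V' s ≤
      (1 / (1 - γ)) *
        (Finset.univ.sup' Finset.univ_nonempty (fun s' =>
          (∑ a, π s' a * Q' s' a) - (∑ a, π' s' a * Q' s' a)))
      + (α / (1 - γ)) *
        (Finset.univ.sup' Finset.univ_nonempty (fun s'' =>
          |(-∑ a, π s'' a * Real.log (π s'' a)) -
            (-∑ a, π' s'' a * Real.log (π' s'' a))|)) := by
  set D := Finset.univ.sup' Finset.univ_nonempty (fun s' =>
      (∑ a, π s' a * Q' s' a) - (∑ a, π' s' a * Q' s' a)) with hDdef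
  set E := Finset.univ.sup' Finset.univ_nonempty (fun s'' =>
      |(-∑ a, π s'' a * Real.log (π s'' a)) -
        (-∑ a, π' s'' a * Real.log (π' s'' a))|) with hEdef
  set M := Finset.univ.sup' Finset.univ_nonempty (fun t => V t - V' t) with hMdef
  have hγ' : (0:ℝ) < 1 - γ := by linarith
  have expand : ∀ (σ QQ : S → A → ℝ) (t : S),
      ∑ a, σ t a * (QQ t a - α * Real.log (σ t a)) =
        (∑ a, σ t a * QQ t a) - α * ∑ a, σ t a * Real.log (σ t a) := by
    intro σ QQ t
    rw [Finset.mul_sum, ← Finset.sum_sub_distrib]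
    exact Finset.sum_congr rfl (fun a _ => by ring)
  have key : ∀ t, V t - V' t ≤ γ * M + D + α * E := by
    intro t
    have h1 : V t - V' t = (∑ a, π t a * (Q t a - Q' t a))
        + ((∑ a, π t a * Q' t a) - (∑ a, π' t a * Q' t a))
        + α * ((-∑ a, π t a * Real.log (π t a)) -
            (-∑ a, π' t a * Real.log (π' t a))) := by
      rw [hV t, hV' t, expand π Q t, expand π' Q' t]
      have : ∑ a, π t a * (Q t a - Q' t a) =
          (∑ a, π t a * Q t a) - ∑ a, π t a * Q' t a := by
        rw [← Finset.sum_sub_distrib]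
        exact Finset.sum_congr rfl (fun a _ => by ring)
      rw [this]; ring
    have hterm1 : ∑ a, π t a * (Q t a - Q' t a) ≤ γ * M := by
      have hQQ : ∀ a, Q t a - Q' t a = γ * ∑ s', p t a s' * (V s' - V' s') := by
        intro a
        rw [hQ t a, hQ' t a]
        have : ∑ s', p t a s' * (V s' - V' s') =
            (∑ s', p t a s' * V s') - ∑ s', p t a s' * V' s' := by
          rw [← Finset.sum_sub_distrib]
          exact Finset.sum_congr rfl (fun a _ => by ring)
        rw [this]; ring
      have hinner : ∀ a, ∑ s', p t a s' * (V s' - V' s') ≤ M := by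
        intro a
        calc ∑ s', p t a s' * (V s' - V' s')
            ≤ ∑ s', p t a s' * M := by
              refine Finset.sum_le_sum (fun s' _ => ?_)
              exact mul_le_mul_of_nonneg_left
                (Finset.le_sup' (fun t => V t - V' t) (Finset.mem_univ s'))
                (hp_nonneg t a s')
          _ = M := by rw [← Finset.sum_mul, hp_sum, one_mul]
      calc ∑ a, π t a * (Q t a - Q' t a)
          ≤ ∑ a, π t a * (γ * M) := by
            refine Finset.sum_le_sum (fun a _ => ?_)
            rw [hQQ a]
            exact mul_le_mul_of_nonneg_left
              (mul_le_mul_of_nonneg_left (hinner a) hγ) (hπ_nonneg t a)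
        _ = γ * M := by rw [← Finset.sum_mul, hπ_sum, one_mul]
    have hterm2 : (∑ a, π t a * Q' t a) - (∑ a, π' t a * Q' t a) ≤ D :=
      Finset.le_sup' (fun s' => (∑ a, π s' a * Q' s' a) - (∑ a, π' s' a * Q' s' a))
        (Finset.mem_univ t)
    have hterm3 : (-∑ a, π t a * Real.log (π t a)) -
        (-∑ a, π' t a * Real.log (π' t a)) ≤ E :=
      le_trans (le_abs_self _)
        (Finset.le_sup' (fun s'' => |(-∑ a, π s'' a * Real.log (π s'' a)) -
          (-∑ a, π' s'' a * Real.log (π' s'' a))|) (Finset.mem_univ t))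
    rw [h1]
    have := mul_le_mul_of_nonneg_left hterm3 hα
    linarith
  have hM : (1 - γ) * M ≤ D + α * E := by
    have : M ≤ γ * M + D + α * E :=
      Finset.sup'_le _ _ (fun t _ => key t)
    linarith
  intro s
  have hVle : V s - V' s ≤ M := Finset.le_sup' (fun t => V t - V' t) (Finset.mem_univ s)
  have h2 : V s - V' s ≤ (D + α * E) / (1 - γ) :=
    le_trans hVle (by rw [le_div_iff₀ hγ']; linarith)
  have h3 : (1 / (1 - γ)) * D + (α / (1 - γ)) * E = (D + α * E) / (1 - γ) := by
    field_simp
  linarith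
end

section
/- For two policies π and π' on a finite MDP, the difference of soft values decomposes via the normalized discounted state occupancy: V_π(s) − V_{π'}(s) = (1/(1−γ)) E_{s'∼ρ_s^π}[E_{a∼π(·|s')}[Q_{π'}(s',a) − α log π(a|s')] − E_{a∼π'(·|s')}[Q_{π'}(s',a) − α log π'(a|s')]], where ρ_s^π(s') = (1−γ) Σ_{t≥0} γ^t P(s_t = s' | s_0 = s, π). -/
/-- soft performance difference lemma: the difference of soft values
decomposes through the normalized discounted state occupancy ρ_s^π. -/
theorem soft_performance_difference_lemma
    {S A : Type*} [Fintype S] [Fintype A] [DecidableEq S]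
    (p : S → A → S → ℝ) (r : S → A → ℝ) (γ α : ℝ)
    (hγ : 0 ≤ γ) (hγ1 : γ < 1) (hα : 0 ≤ α)
    (hp_nonneg : ∀ s a s', 0 ≤ p s a s')
    (hp_sum : ∀ s a, ∑ s', p s a s' = 1)
    (π π' : S → A → ℝ)
    (hπ_nonneg : ∀ s a, 0 ≤ π s a) (hπ_sum : ∀ s, ∑ a, π s a = 1)
    (hπ'_nonneg : ∀ s a, 0 ≤ π' s a) (hπ'_sum : ∀ s, ∑ a, π' s a = 1)
    (Q Q' : S → A → ℝ) (V V' : S → ℝ)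
    (hQ : ∀ s a, Q s a = r s a + γ * ∑ s', p s a s' * V s')
    (hV : ∀ s, V s = ∑ a, π s a * (Q s a - α * Real.log (π s a)))
    (hQ' : ∀ s a, Q' s a = r s a + γ * ∑ s', p s a s' * V' s')
    (hV' : ∀ s, V' s = ∑ a, π' s a * (Q' s a - α * Real.log (π' s a)))
    -- state-transition matrix of the Markov chain induced by π
    (P : Matrix S S ℝ) (hP : ∀ s s', P s s' = ∑ a, π s a * p s a s')
    -- normalized discounted state occupancy
    (ρ : S → S → ℝ)
    (hρ : ∀ s s', ρ s s' = (1 - γ) * ∑' t : ℕ, γ ^ t * (P ^ t) s s') :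
    ∀ s : S, V s - V' s =
      (1 / (1 - γ)) * ∑ s', ρ s s' *
        ((∑ a, π s' a * (Q' s' a - α * Real.log (π s' a))) -
          (∑ a, π' s' a * (Q' s' a - α * Real.log (π' s' a)))) := by
  classical
  have hγabs : |γ| < 1 := by rw [abs_of_nonneg hγ]; exact hγ1
  set f : S → ℝ := fun u => V u - V' u with hf
  set Δ : S → ℝ := fun u =>
    (∑ a, π u a * (Q' u a - α * Real.log (π u a))) - V' u with hΔdef
  -- P is stochastic
  have hPnn : ∀ u u', 0 ≤ P u u' := fun u u' => by
    rw [hP]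
    exact Finset.sum_nonneg fun a _ => mul_nonneg (hπ_nonneg u a) (hp_nonneg u a u')
  have hPsum : ∀ u, ∑ u', P u u' = 1 := fun u => by
    simp only [hP]
    rw [Finset.sum_comm]
    simp [← Finset.mul_sum, hp_sum, hπ_sum]
  have hPtnn : ∀ (t : ℕ) (u u' : S), 0 ≤ (P ^ t) u u' := by
    intro t
    induction t with
    | zero =>
      intro u u'
      simp only [pow_zero, Matrix.one_apply]
      split <;> norm_num
    | succ n ih =>
      intro u u'
      rw [pow_succ, Matrix.mul_apply]
      exact Finset.sum_nonneg fun k _ => mul_nonneg (ih u k) (hPnn k u')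
  have hPtsum : ∀ (t : ℕ) (u : S), ∑ u', (P ^ t) u u' = 1 := by
    intro t
    induction t with
    | zero => intro u; simp [Matrix.one_apply]
    | succ n ih =>
      intro u
      simp only [pow_succ, Matrix.mul_apply]
      rw [Finset.sum_comm]
      simp [← Finset.mul_sum, hPsum, ih]
  have hPtle : ∀ (t : ℕ) (u u' : S), (P ^ t) u u' ≤ 1 := fun t u u' => by
    calc (P ^ t) u u' ≤ ∑ u'', (P ^ t) u u'' :=
          Finset.single_le_sum (fun i _ => hPtnn t u i) (Finset.mem_univ u')
      _ = 1 := hPtsum t u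
  -- recursion for f
  have hrec : ∀ u, f u = Δ u + γ * ∑ u', P u u' * f u' := by
    intro u
    have hQd : ∀ a, Q u a = Q' u a + γ * ∑ u', p u a u' * f u' := by
      intro a
      rw [hQ, hQ']
      simp only [hf, mul_sub, Finset.sum_sub_distrib]
      ring
    have h1 : V u = (∑ a, π u a * (Q' u a - α * Real.log (π u a)))
        + γ * ∑ a, π u a * ∑ u', p u a u' * f u' := by
      rw [hV]
      rw [Finset.mul_sum]
      rw [← Finset.sum_add_distrib]
      refine Finset.sum_congr rfl fun a _ => ?_
      rw [hQd a]
      ring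
    have h2 : ∑ u', P u u' * f u' = ∑ a, π u a * ∑ u', p u a u' * f u' := by
      simp only [hP, Finset.sum_mul, Finset.mul_sum]
      rw [Finset.sum_comm]
      refine Finset.sum_congr rfl fun a _ => Finset.sum_congr rfl fun u' _ => ?_
      ring
    rw [h2]
    simp only [hf, hΔdef, h1, h2]
    ring
  intro s
  -- iterated recursion
  have hiter : ∀ n : ℕ, f s =
      (∑ t ∈ Finset.range n, γ ^ t * ∑ u', (P ^ t) s u' * Δ u')
        + γ ^ n * ∑ u', (P ^ n) s u' * f u' := by
    intro n
    induction n with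
    | zero => simp [Matrix.one_apply]
    | succ n ih =>
      rw [ih, Finset.sum_range_succ]
      have : ∑ u', (P ^ n) s u' * f u'
          = (∑ u', (P ^ n) s u' * Δ u') + γ * ∑ u', (P ^ (n + 1)) s u' * f u' := by
        calc ∑ u', (P ^ n) s u' * f u'
            = ∑ u', (P ^ n) s u' * (Δ u' + γ * ∑ u'', P u' u'' * f u'') := by
              refine Finset.sum_congr rfl fun u' _ => ?_
              rw [← hrec u']
          _ = (∑ u', (P ^ n) s u' * Δ u')
              + γ * ∑ u', ∑ u'', (P ^ n) s u' * P u' u'' * f u'' := by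
              simp only [mul_add, Finset.sum_add_distrib, Finset.mul_sum]
              congr 1
              refine Finset.sum_congr rfl fun u' _ => Finset.sum_congr rfl fun u'' _ => ?_
              ring
          _ = (∑ u', (P ^ n) s u' * Δ u')
              + γ * ∑ u'', (P ^ (n + 1)) s u'' * f u'' := by
              congr 1
              rw [Finset.sum_comm]
              congr 1
              refine Finset.sum_congr rfl fun u'' _ => ?_
              rw [pow_succ, Matrix.mul_apply, Finset.sum_mul]
      rw [this]
      ring
  -- summability
  set C : ℝ := ∑ u', |Δ u'| with hC
  have hb : ∀ (t : ℕ) (u' : S), |γ ^ t * ((P ^ t) s u' * Δ u')| ≤ γ ^ t * |Δ u'| := by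
    intro t u'
    rw [abs_mul, abs_mul, abs_of_nonneg (pow_nonneg hγ t),
      abs_of_nonneg (hPtnn t s u')]
    have h1 : (P ^ t) s u' * |Δ u'| ≤ 1 * |Δ u'| :=
      mul_le_mul_of_nonneg_right (hPtle t s u') (abs_nonneg _)
    nlinarith [pow_nonneg hγ t, abs_nonneg (Δ u'), hPtnn t s u']
  have hgsum : ∀ u' : S, Summable fun t : ℕ => γ ^ t * ((P ^ t) s u' * Δ u') := by
    intro u'
    refine Summable.of_abs (Summable.of_nonneg_of_le (fun t => abs_nonneg _)
      (fun t => hb t u') ?_)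
    exact (summable_geometric_of_lt_one hγ hγ1).mul_right _
  have hsum : Summable fun t : ℕ => γ ^ t * ∑ u', (P ^ t) s u' * Δ u' := by
    have : (fun t : ℕ => γ ^ t * ∑ u', (P ^ t) s u' * Δ u')
        = fun t : ℕ => ∑ u', γ ^ t * ((P ^ t) s u' * Δ u') := by
      funext t; rw [Finset.mul_sum]
    rw [this]
    exact summable_sum fun u' _ => hgsum u'
  -- f s equals the tsum
  have hfs : f s = ∑' t : ℕ, γ ^ t * ∑ u', (P ^ t) s u' * Δ u' := by
    set D : ℝ := ∑ u', |f u'| with hD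
    have hrem : ∀ n : ℕ,
        |f s - ∑ t ∈ Finset.range n, γ ^ t * ∑ u', (P ^ t) s u' * Δ u'| ≤ γ ^ n * D := by
      intro n
      have := hiter n
      have heq : f s - ∑ t ∈ Finset.range n, γ ^ t * ∑ u', (P ^ t) s u' * Δ u'
          = γ ^ n * ∑ u', (P ^ n) s u' * f u' := by
        rw [this]; ring
      rw [heq, abs_mul, abs_of_nonneg (pow_nonneg hγ n)]
      refine mul_le_mul_of_nonneg_left ?_ (pow_nonneg hγ n)
      calc |∑ u', (P ^ n) s u' * f u'| ≤ ∑ u', |(P ^ n) s u' * f u'| :=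
            Finset.abs_sum_le_sum_abs _ _
        _ ≤ ∑ u', |f u'| := by
            refine Finset.sum_le_sum fun u' _ => ?_
            rw [abs_mul, abs_of_nonneg (hPtnn n s u')]
            nlinarith [hPtnn n s u', hPtle n s u', abs_nonneg (f u')]
    have hlim0 : Filter.Tendsto
        (fun n : ℕ => f s - ∑ t ∈ Finset.range n, γ ^ t * ∑ u', (P ^ t) s u' * Δ u')
        Filter.atTop (nhds 0) := by
      have hgD : Filter.Tendsto (fun n : ℕ => γ ^ n * D) Filter.atTop (nhds 0) := by
        have := tendsto_pow_atTop_nhds_zero_of_lt_one hγ hγ1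
        simpa using this.mul_const D
      refine squeeze_zero_norm (fun n => ?_) hgD
      simpa using hrem n
    have hlim1 : Filter.Tendsto
        (fun n : ℕ => f s - ∑ t ∈ Finset.range n, γ ^ t * ∑ u', (P ^ t) s u' * Δ u')
        Filter.atTop (nhds (f s - ∑' t : ℕ, γ ^ t * ∑ u', (P ^ t) s u' * Δ u')) :=
      (tendsto_const_nhds).sub hsum.hasSum.tendsto_sum_nat
    have := tendsto_nhds_unique hlim1 hlim0
    linarith
  -- rewrite the RHS
  have hΔeq : ∀ u' : S,
      (∑ a, π u' a * (Q' u' a - α * Real.log (π u' a))) -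
        (∑ a, π' u' a * (Q' u' a - α * Real.log (π' u' a))) = Δ u' := by
    intro u'
    rw [hΔdef]
    rw [← hV' u']
  have hγne : (1 : ℝ) - γ ≠ 0 := by linarith
  have hRHS : (1 / (1 - γ)) * ∑ u', ρ s u' *
        ((∑ a, π u' a * (Q' u' a - α * Real.log (π u' a))) -
          (∑ a, π' u' a * (Q' u' a - α * Real.log (π' u' a))))
      = ∑ u', (∑' t : ℕ, γ ^ t * ((P ^ t) s u' * Δ u')) := by
    rw [Finset.mul_sum]
    refine Finset.sum_congr rfl fun u' _ => ?_
    rw [hΔeq u', hρ s u']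
    have h1 : (1 / (1 - γ)) * (((1 - γ) * ∑' t : ℕ, γ ^ t * (P ^ t) s u') * Δ u')
        = (∑' t : ℕ, γ ^ t * (P ^ t) s u') * Δ u' := by
      field_simp
    rw [h1, ← tsum_mul_right]
    exact tsum_congr fun t => by ring
  rw [hRHS]
  rw [← Summable.tsum_finsetSum fun u' _ => hgsum u']
  rw [show (V s - V' s) = f s from rfl, hfs]
  exact tsum_congr fun t => by rw [Finset.mul_sum]
end

section
/- If a policy π satisfies Adv_{π_tar}(s, π) ≥ 0 at every state s (nonnegative soft expected advantage over π_tar everywhere), then V_π(s) ≥ V_{π_tar}(s) for all s (soft policy improvement). -/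
/-- soft policy improvement: if a policy π has nonnegative soft
expected advantage over π_tar at every state, then V_π ≥ V_{π_tar} everywhere. -/
theorem soft_policy_improvement
    {S A : Type*} [Fintype S] [Fintype A]
    (p : S → A → S → ℝ) (r : S → A → ℝ) (γ α : ℝ)
    (hγ : 0 ≤ γ) (hγ1 : γ < 1) (hα : 0 ≤ α)
    (hp_nonneg : ∀ s a s', 0 ≤ p s a s')
    (hp_sum : ∀ s a, ∑ s', p s a s' = 1)
    (πtar π : S → A → ℝ)
    (hπtar_nonneg : ∀ s a, 0 ≤ πtar s a) (hπtar_sum : ∀ s, ∑ a, πtar s a = 1)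
    (hπ_nonneg : ∀ s a, 0 ≤ π s a) (hπ_sum : ∀ s, ∑ a, π s a = 1)
    (Qtar : S → A → ℝ) (Vtar Vπ : S → ℝ)
    -- soft Bellman equations for π_tar
    (hQtar : ∀ s a, Qtar s a = r s a + γ * ∑ s', p s a s' * Vtar s')
    (hVtar : ∀ s, Vtar s = ∑ a, πtar s a * (Qtar s a - α * Real.log (πtar s a)))
    -- soft Bellman equation for π
    (hVπ : ∀ s, Vπ s =
      ∑ a, π s a * (r s a - α * Real.log (π s a) + γ * ∑ s', p s a s' * Vπ s'))
    -- nonnegative soft expected advantage of π over π_tar everywhere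
    (hAdv : ∀ s, 0 ≤ (∑ a, π s a * (Qtar s a - α * Real.log (π s a))) - Vtar s) :
    ∀ s : S, Vπ s ≥ Vtar s := by
  intro s0
  obtain ⟨s, -, hs⟩ := Finset.exists_min_image Finset.univ
    (fun s => Vπ s - Vtar s) ⟨s0, Finset.mem_univ s0⟩
  set m := Vπ s - Vtar s with hm
  have hmin : ∀ s', m ≤ Vπ s' - Vtar s' := fun s' => hs s' (Finset.mem_univ s')
  -- key inequality: γ * m ≤ m
  have key : γ * m ≤ m := by
    have step1 : γ * m = ∑ a, π s a * (γ * m) := by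
      rw [← Finset.sum_mul, hπ_sum s, one_mul]
    have step2 : ∀ a, γ * m ≤ γ * ∑ s', p s a s' * (Vπ s' - Vtar s') := by
      intro a
      apply mul_le_mul_of_nonneg_left _ hγ
      calc m = ∑ s', p s a s' * m := by rw [← Finset.sum_mul, hp_sum s a, one_mul]
        _ ≤ ∑ s', p s a s' * (Vπ s' - Vtar s') :=
          Finset.sum_le_sum fun s' _ =>
            mul_le_mul_of_nonneg_left (hmin s') (hp_nonneg s a s')
    have step3 : ∑ a, π s a * (γ * m)
        ≤ ∑ a, π s a * (γ * ∑ s', p s a s' * (Vπ s' - Vtar s')) :=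
      Finset.sum_le_sum fun a _ =>
        mul_le_mul_of_nonneg_left (step2 a) (hπ_nonneg s a)
    have hexp : ∀ a, γ * ∑ s', p s a s' * (Vπ s' - Vtar s')
        = (r s a - α * Real.log (π s a) + γ * ∑ s', p s a s' * Vπ s')
          - (Qtar s a - α * Real.log (π s a)) := by
      intro a
      rw [hQtar]
      have : ∑ s', p s a s' * (Vπ s' - Vtar s')
          = (∑ s', p s a s' * Vπ s') - ∑ s', p s a s' * Vtar s' := by
        rw [← Finset.sum_sub_distrib]
        exact Finset.sum_congr rfl fun s' _ => mul_sub _ _ _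
      rw [this]; ring
    have step4 : ∑ a, π s a * (γ * ∑ s', p s a s' * (Vπ s' - Vtar s'))
        = Vπ s - ∑ a, π s a * (Qtar s a - α * Real.log (π s a)) := by
      rw [hVπ s, ← Finset.sum_sub_distrib]
      exact Finset.sum_congr rfl fun a _ => by rw [hexp a, mul_sub]
    have step5 : Vπ s - ∑ a, π s a * (Qtar s a - α * Real.log (π s a))
        ≤ Vπ s - Vtar s := by
      have := hAdv s
      linarith
    calc γ * m = ∑ a, π s a * (γ * m) := step1
      _ ≤ ∑ a, π s a * (γ * ∑ s', p s a s' * (Vπ s' - Vtar s')) := step3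
      _ = Vπ s - ∑ a, π s a * (Qtar s a - α * Real.log (π s a)) := step4
      _ ≤ m := step5
  have hm0 : 0 ≤ m := by nlinarith [key]
  have := hmin s0
  linarith
end
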